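/- arXiv:2501.12126 — 2 statements merged into one kernel-verified Lean document; each statement's English description precedes it below -/
import Mathlib

section
/- Let 0 → B →^i E →^p A → 0 be a non-abelian extension of anti-dendriform algebras with section s, inducing non-abelian 2-cocycle (l_≻, r_≻, l_≺, r_≺, ω₁, ω₂). A pair (α,β) ∈ Aut(A) × Aut(B) is inducible (i.e., there exists γ ∈ Aut(E) with γ(B) = B, γi = iβ, pγ = αp) if and only if there exists a linear map φ: A → B satisfying: β(l_≻(x)a) - l_≻(α(x))β(a) = φ(x)≻_B β(a); β(r_≻(x)a) - r_≻(α(x))β(a) = β(a)≻_B φ(x); β(l_≺(x)a) - l_≺(α(x))β(a) = φ(x)≺_B β(a); β(r_≺(x)a) - r_≺(α(x))β(a) = β(a)≺_B φ(x); βω₁(x,y) - ω₁(α(x),α(y)) = φ(x)≻_B φ(y) - φ(x≻_A y) + l_≻(α(x))φ(y) + r_≻(α(y))φ(x); βω₂(x,y) - ω₂(α(x),α(y)) = φ(x)≺_B φ(y) - φ(x≺_A y) + l_≺(α(x))φ(y) + r_≺(α(y))φ(x), for all x,y ∈ A and a ∈ B. -/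
def IsLin (k : Type*) [Field k] {V W : Type*} [AddCommGroup V] [Module k V]
    [AddCommGroup W] [Module k W] (f : V → W) : Prop :=
  ∀ (c : k) (u v : V), f (c • u + v) = c • f u + f v

def IsBilin (k : Type*) [Field k] {U V W : Type*} [AddCommGroup U] [Module k U]
    [AddCommGroup V] [Module k V] [AddCommGroup W] [Module k W]
    (f : U → V → W) : Prop :=
  (∀ x, IsLin k (f x)) ∧ (∀ y, IsLin k (fun x => f x y))

/-- An anti-dendriform algebra structure given by two bilinear operations `s` (≻) and `p` (≺). -/
def IsADAlg (k : Type*) [Field k] {A : Type*} [AddCommGroup A] [Module k A]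
    (s p : A → A → A) : Prop :=
  IsBilin k s ∧ IsBilin k p ∧
  (∀ x y z, s x (s y z) = - s (s x y + p x y) z) ∧
  (∀ x y z, s x (s y z) = - p x (s y z + p y z)) ∧
  (∀ x y z, s x (s y z) = p (p x y) z) ∧
  (∀ x y z, p (s x y) z = s x (p y z))

section Helpers
variable {k : Type*} [Field k] {U V W : Type*} [AddCommGroup U] [Module k U]
  [AddCommGroup V] [Module k V] [AddCommGroup W] [Module k W]

theorem lin_add {f : V → W} (hf : IsLin k f) (u v : V) : f (u + v) = f u + f v := by
  have h := hf 1 u v; simpa using h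

theorem lin_zero {f : V → W} (hf : IsLin k f) : f 0 = 0 := by
  have h := lin_add hf 0 0
  rw [add_zero] at h
  exact add_eq_left.mp h.symm

theorem lin_smul {f : V → W} (hf : IsLin k f) (c : k) (u : V) : f (c • u) = c • f u := by
  have h := hf c u 0
  rwa [add_zero, lin_zero hf, add_zero] at h

theorem lin_neg {f : V → W} (hf : IsLin k f) (u : V) : f (-u) = - f u := by
  have h := lin_smul hf (-1) u
  simpa using h

theorem lin_sub {f : V → W} (hf : IsLin k f) (u v : V) : f (u - v) = f u - f v := by
  rw [sub_eq_add_neg, lin_add hf, lin_neg hf, sub_eq_add_neg]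

theorem bilin_addl {m : U → V → W} (hm : IsBilin k m) (u u' : U) (v : V) :
    m (u + u') v = m u v + m u' v := lin_add (hm.2 v) u u'

theorem bilin_addr {m : U → V → W} (hm : IsBilin k m) (u : U) (v v' : V) :
    m u (v + v') = m u v + m u v' := lin_add (hm.1 u) v v'

theorem bilin_subl {m : U → V → W} (hm : IsBilin k m) (u u' : U) (v : V) :
    m (u - u') v = m u v - m u' v := lin_sub (hm.2 v) u u'

theorem bilin_subr {m : U → V → W} (hm : IsBilin k m) (u : U) (v v' : V) :
    m u (v - v') = m u v - m u v' := lin_sub (hm.1 u) v v'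

end Helpers

theorem stmt14 {k A B E : Type*} [Field k] [AddCommGroup A] [Module k A]
    [AddCommGroup B] [Module k B] [AddCommGroup E] [Module k E]
    (sA pA : A → A → A) (sB pB : B → B → B) (sE pE : E → E → E)
    (hA : IsADAlg k sA pA) (hB : IsADAlg k sB pB) (hE : IsADAlg k sE pE)
    (i : B → E) (hi : IsLin k i) (hiinj : Function.Injective i)
    (his : ∀ a b, i (sB a b) = sE (i a) (i b))
    (hip : ∀ a b, i (pB a b) = pE (i a) (i b))
    (pr : E → A) (hpr : IsLin k pr) (hprsur : Function.Surjective pr)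
    (hprs : ∀ u v, pr (sE u v) = sA (pr u) (pr v))
    (hprp : ∀ u v, pr (pE u v) = pA (pr u) (pr v))
    (hexact : ∀ e, pr e = 0 ↔ ∃ b, i b = e)
    (st : A → E) (hst : IsLin k st) (hsec : ∀ x, pr (st x) = x)
    -- the induced non-abelian 2-cocycle (valued in B via i)
    (ls rs lp rp : A → B → B) (w1 w2 : A → A → B)
    (hls : ∀ x a, i (ls x a) = sE (st x) (i a))
    (hrs : ∀ x a, i (rs x a) = sE (i a) (st x))
    (hlp : ∀ x a, i (lp x a) = pE (st x) (i a))
    (hrp : ∀ x a, i (rp x a) = pE (i a) (st x))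
    (hw1 : ∀ x y, i (w1 x y) = sE (st x) (st y) - st (sA x y))
    (hw2 : ∀ x y, i (w2 x y) = pE (st x) (st y) - st (pA x y))
    -- the pair of automorphisms (α, β)
    (α : A → A) (hα : IsLin k α) (hαbij : Function.Bijective α)
    (hαs : ∀ x y, α (sA x y) = sA (α x) (α y))
    (hαp : ∀ x y, α (pA x y) = pA (α x) (α y))
    (β : B → B) (hβ : IsLin k β) (hβbij : Function.Bijective β)
    (hβs : ∀ a b, β (sB a b) = sB (β a) (β b))
    (hβp : ∀ a b, β (pB a b) = pB (β a) (β b)) :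
    (∃ γ : E → E, IsLin k γ ∧ Function.Bijective γ ∧
        (∀ u v, γ (sE u v) = sE (γ u) (γ v)) ∧
        (∀ u v, γ (pE u v) = pE (γ u) (γ v)) ∧
        (∀ a : B, γ (i a) = i (β a)) ∧
        (∀ e : E, pr (γ e) = α (pr e)))
    ↔
    (∃ φ : A → B, IsLin k φ ∧
        (∀ x a, β (ls x a) - ls (α x) (β a) = sB (φ x) (β a)) ∧
        (∀ x a, β (rs x a) - rs (α x) (β a) = sB (β a) (φ x)) ∧
        (∀ x a, β (lp x a) - lp (α x) (β a) = pB (φ x) (β a)) ∧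
        (∀ x a, β (rp x a) - rp (α x) (β a) = pB (β a) (φ x)) ∧
        (∀ x y, β (w1 x y) - w1 (α x) (α y)
          = sB (φ x) (φ y) - φ (sA x y) + ls (α x) (φ y) + rs (α y) (φ x)) ∧
        (∀ x y, β (w2 x y) - w2 (α x) (α y)
          = pB (φ x) (φ y) - φ (pA x y) + lp (α x) (φ y) + rp (α y) (φ x))) := by
  classical
  -- pr ∘ i = 0
  have hpri : ∀ b, pr (i b) = 0 := fun b => (hexact (i b)).mpr ⟨b, rfl⟩
  -- retraction r : E → B
  have hker : ∀ e : E, ∃ b, i b = e - st (pr e) := by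
    intro e
    apply (hexact _).mp
    rw [lin_sub hpr, hsec, sub_self]
  set r : E → B := fun e => Classical.choose (hker e) with hrdef
  have hir : ∀ e, i (r e) = e - st (pr e) := fun e => Classical.choose_spec (hker e)
  have hdecomp : ∀ e, e = i (r e) + st (pr e) := by
    intro e; rw [hir]; abel
  have hprform : ∀ (c : B) (z : A), pr (i c + st z) = z := by
    intro c z; rw [lin_add hpr, hpri, hsec, zero_add]
  have hrform : ∀ (c : B) (z : A), r (i c + st z) = c := by
    intro c z; apply hiinj; rw [hir, hprform, add_sub_cancel_right]
  have hrlin : IsLin k r := by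
    intro c u v
    apply hiinj
    rw [lin_add hi, lin_smul hi, hir, hir, hir, hpr c u v, hst c (pr u) (pr v)]
    module
  -- additivity of the cocycle maps in the B-argument
  have hls_add : ∀ x a b, ls x (a + b) = ls x a + ls x b := by
    intro x a b; apply hiinj
    simp only [lin_add hi, hls]
    exact lin_add (hE.1.1 (st x)) (i a) (i b)
  have hrs_add : ∀ x a b, rs x (a + b) = rs x a + rs x b := by
    intro x a b; apply hiinj
    simp only [lin_add hi, hrs]
    exact lin_add (hE.1.2 (st x)) (i a) (i b)
  have hlp_add : ∀ x a b, lp x (a + b) = lp x a + lp x b := by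
    intro x a b; apply hiinj
    simp only [lin_add hi, hlp]
    exact lin_add (hE.2.1.1 (st x)) (i a) (i b)
  have hrp_add : ∀ x a b, rp x (a + b) = rp x a + rp x b := by
    intro x a b; apply hiinj
    simp only [lin_add hi, hrp]
    exact lin_add (hE.2.1.2 (st x)) (i a) (i b)
  -- product expansion in E
  have hmulS : ∀ (a : B) (x : A) (b : B) (y : A),
      sE (i a + st x) (i b + st y)
        = i (sB a b + rs y a + ls x b + w1 x y) + st (sA x y) := by
    intro a x b y
    simp only [lin_add hi, his, hrs, hls, hw1, bilin_addl hE.1, bilin_addr hE.1]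
    abel
  have hmulP : ∀ (a : B) (x : A) (b : B) (y : A),
      pE (i a + st x) (i b + st y)
        = i (pB a b + rp y a + lp x b + w2 x y) + st (pA x y) := by
    intro a x b y
    simp only [lin_add hi, hip, hrp, hlp, hw2, bilin_addl hE.2.1, bilin_addr hE.2.1]
    abel
  constructor
  · rintro ⟨γ, hγl, hγb, hγS, hγP, hγI, hγPr⟩
    set φ : A → B := fun x => r (γ (st x)) with hφdef
    have hiφ : ∀ x, i (φ x) = γ (st x) - st (α x) := by
      intro x; simp only [hφdef]; rw [hir, hγPr, hsec]
    have hγst : ∀ x, γ (st x) = i (φ x) + st (α x) := by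
      intro x; rw [hiφ x]; abel
    refine ⟨φ, ?_, ?_, ?_, ?_, ?_, ?_, ?_⟩
    · intro c x y
      simp only [hφdef]
      rw [hst c x y, hγl c (st x) (st y), hrlin c (γ (st x)) (γ (st y))]
    · intro x a
      apply hiinj
      rw [lin_sub hi, ← hγI (ls x a)]
      simp only [hls, hγS, hγI, hγst, his, bilin_addl hE.1]
      abel
    · intro x a
      apply hiinj
      rw [lin_sub hi, ← hγI (rs x a)]
      simp only [hrs, hγS, hγI, hγst, his, bilin_addr hE.1]
      abel
    · intro x a
      apply hiinj
      rw [lin_sub hi, ← hγI (lp x a)]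
      simp only [hlp, hγP, hγI, hγst, hip, bilin_addl hE.2.1]
      abel
    · intro x a
      apply hiinj
      rw [lin_sub hi, ← hγI (rp x a)]
      simp only [hrp, hγP, hγI, hγst, hip, bilin_addr hE.2.1]
      abel
    · intro x y
      apply hiinj
      rw [lin_sub hi, ← hγI (w1 x y), hw1 x y, lin_sub hγl, hγS]
      simp only [hγst, hw1, hls, hrs, his, lin_add hi, lin_sub hi, hαs,
        bilin_addl hE.1, bilin_addr hE.1]
      abel
    · intro x y
      apply hiinj
      rw [lin_sub hi, ← hγI (w2 x y), hw2 x y, lin_sub hγl, hγP]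
      simp only [hγst, hw2, hlp, hrp, hip, lin_add hi, lin_sub hi, hαp,
        bilin_addl hE.2.1, bilin_addr hE.2.1]
      abel
  · rintro ⟨φ, hφ, h1, h2, h3, h4, h5, h6⟩
    set γ : E → E := fun e => i (β (r e) + φ (pr e)) + st (α (pr e)) with hγdef
    have hγe : ∀ e, γ e = i (β (r e) + φ (pr e)) + st (α (pr e)) := fun e => rfl
    have hγform : ∀ (c : B) (z : A), γ (i c + st z) = i (β c + φ z) + st (α z) := by
      intro c z
      rw [hγe, hrform, hprform]
    have hγlin : IsLin k γ := by
      intro c u v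
      simp only [hγe]
      rw [hpr c u v, hrlin c u v, hβ c (r u) (r v), hφ c (pr u) (pr v),
        hα c (pr u) (pr v), hst c (α (pr u)) (α (pr v))]
      simp only [lin_add hi, lin_smul hi]
      module
    have hprγ : ∀ e, pr (γ e) = α (pr e) := by
      intro e
      rw [hγe, lin_add hpr, hpri, hsec, zero_add]
    have hγI : ∀ a, γ (i a) = i (β a) := by
      intro a
      have : (i a : E) = i a + st 0 := by rw [lin_zero hst, add_zero]
      rw [this, hγform, lin_zero hφ, add_zero, lin_zero hα, lin_zero hst, add_zero]
    have hkeyS : ∀ (a : B) (x : A) (b : B) (y : A),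
        β (sB a b + rs y a + ls x b + w1 x y) + φ (sA x y)
          = sB (β a + φ x) (β b + φ y) + rs (α y) (β a + φ x)
            + ls (α x) (β b + φ y) + w1 (α x) (α y) := by
      intro a x b y
      simp only [lin_add hβ, hβs, eq_add_of_sub_eq (h2 y a), eq_add_of_sub_eq (h1 x b),
        eq_add_of_sub_eq (h5 x y), bilin_addl hB.1, bilin_addr hB.1, hrs_add, hls_add]
      abel
    have hkeyP : ∀ (a : B) (x : A) (b : B) (y : A),
        β (pB a b + rp y a + lp x b + w2 x y) + φ (pA x y)
          = pB (β a + φ x) (β b + φ y) + rp (α y) (β a + φ x)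
            + lp (α x) (β b + φ y) + w2 (α x) (α y) := by
      intro a x b y
      simp only [lin_add hβ, hβp, eq_add_of_sub_eq (h4 y a), eq_add_of_sub_eq (h3 x b),
        eq_add_of_sub_eq (h6 x y), bilin_addl hB.2.1, bilin_addr hB.2.1, hrp_add, hlp_add]
      abel
    have hγS : ∀ u v, γ (sE u v) = sE (γ u) (γ v) := by
      intro u v
      conv_lhs => rw [hdecomp u, hdecomp v]
      conv_rhs => rw [hγe u, hγe v]
      rw [hmulS, hγform, hmulS]
      rw [show β (sB (r u) (r v) + rs (pr v) (r u) + ls (pr u) (r v) + w1 (pr u) (pr v))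
            + φ (sA (pr u) (pr v))
          = sB (β (r u) + φ (pr u)) (β (r v) + φ (pr v)) + rs (α (pr v)) (β (r u) + φ (pr u))
            + ls (α (pr u)) (β (r v) + φ (pr v)) + w1 (α (pr u)) (α (pr v))
          from hkeyS (r u) (pr u) (r v) (pr v), hαs]
    have hγP : ∀ u v, γ (pE u v) = pE (γ u) (γ v) := by
      intro u v
      conv_lhs => rw [hdecomp u, hdecomp v]
      conv_rhs => rw [hγe u, hγe v]
      rw [hmulP, hγform, hmulP]
      rw [show β (pB (r u) (r v) + rp (pr v) (r u) + lp (pr u) (r v) + w2 (pr u) (pr v))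
            + φ (pA (pr u) (pr v))
          = pB (β (r u) + φ (pr u)) (β (r v) + φ (pr v)) + rp (α (pr v)) (β (r u) + φ (pr u))
            + lp (α (pr u)) (β (r v) + φ (pr v)) + w2 (α (pr u)) (α (pr v))
          from hkeyP (r u) (pr u) (r v) (pr v), hαp]
    have hγinj : Function.Injective γ := by
      intro u v huv
      have h0 : γ (u - v) = 0 := by rw [lin_sub hγlin, huv, sub_self]
      have hp0 : pr (u - v) = 0 := by
        apply hαbij.1
        rw [← hprγ, h0, lin_zero hpr, lin_zero hα]
      have h0' : i (β (r (u - v))) = 0 := by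
        have h := hγe (u - v)
        rw [h0, hp0, lin_zero hφ, add_zero, lin_zero hα, lin_zero hst, add_zero] at h
        exact h.symm
      have hr0 : r (u - v) = 0 := by
        apply hβbij.1
        rw [lin_zero hβ]
        apply hiinj
        rw [h0', lin_zero hi]
      have := hdecomp (u - v)
      rw [hr0, hp0, lin_zero hi, lin_zero hst, add_zero] at this
      exact sub_eq_zero.mp this
    have hγsur : Function.Surjective γ := by
      intro e
      obtain ⟨x, hx⟩ := hαbij.2 (pr e)
      obtain ⟨b, hb⟩ := hβbij.2 (r e - φ x)
      refine ⟨i b + st x, ?_⟩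
      rw [hγform, hb, hx, sub_add_cancel]
      exact (hdecomp e).symm
    exact ⟨γ, hγlin, ⟨hγinj, hγsur⟩, hγS, hγP, hγI, hprγ⟩
end

section
/- Let 0 → B →^i E →^p A → 0 be a non-abelian extension of anti-dendriform algebras with section s and induced 2-cocycle (l_≻, r_≻, l_≺, r_≺, ω₁, ω₂). Let K: Aut_B(E) → Aut(A) × Aut(B) be K(γ) = (pγs, γ|_B). Then the map S: Ker K → Z¹_nab(A,B) defined by S(γ)(x) = γs(x) - s(x) is a group isomorphism, where Z¹_nab(A,B) is the group of non-abelian 1-cocycles. -/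
theorem IsLin.addf {k : Type*} [Field k] {V W : Type*} [AddCommGroup V] [Module k V]
    [AddCommGroup W] [Module k W] {f : V → W} (h : IsLin k f) (u v : V) :
    f (u + v) = f u + f v := by
  have := h 1 u v; simpa using this

theorem IsLin.zerof {k : Type*} [Field k] {V W : Type*} [AddCommGroup V] [Module k V]
    [AddCommGroup W] [Module k W] {f : V → W} (h : IsLin k f) :
    f 0 = 0 := by
  have h0 : f 0 = f 0 + f 0 := by simpa using h.addf 0 0
  exact left_eq_add.mp h0

theorem IsLin.subf {k : Type*} [Field k] {V W : Type*} [AddCommGroup V] [Module k V]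
    [AddCommGroup W] [Module k W] {f : V → W} (h : IsLin k f) (u v : V) :
    f (u - v) = f u - f v := by
  have := h (-1 : k) v u
  rw [neg_smul, one_smul, neg_smul, one_smul, neg_add_eq_sub, neg_add_eq_sub] at this
  exact this

theorem stmt15 {k A B E : Type*} [Field k] [AddCommGroup A] [Module k A]
    [AddCommGroup B] [Module k B] [AddCommGroup E] [Module k E]
    (sA pA : A → A → A) (sB pB : B → B → B) (sE pE : E → E → E)
    (hA : IsADAlg k sA pA) (hB : IsADAlg k sB pB) (hE : IsADAlg k sE pE)
    (i : B → E) (hi : IsLin k i) (hiinj : Function.Injective i)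
    (his : ∀ a b, i (sB a b) = sE (i a) (i b))
    (hip : ∀ a b, i (pB a b) = pE (i a) (i b))
    (pr : E → A) (hpr : IsLin k pr) (hprsur : Function.Surjective pr)
    (hprs : ∀ u v, pr (sE u v) = sA (pr u) (pr v))
    (hprp : ∀ u v, pr (pE u v) = pA (pr u) (pr v))
    (hexact : ∀ e, pr e = 0 ↔ ∃ b, i b = e)
    (st : A → E) (hst : IsLin k st) (hsec : ∀ x, pr (st x) = x)
    (ls rs lp rp : A → B → B)
    (hls : ∀ x a, i (ls x a) = sE (st x) (i a))
    (hrs : ∀ x a, i (rs x a) = sE (i a) (st x))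
    (hlp : ∀ x a, i (lp x a) = pE (st x) (i a))
    (hrp : ∀ x a, i (rp x a) = pE (i a) (st x)) :
    let KerK : (E → E) → Prop := fun γ =>
      IsLin k γ ∧ Function.Bijective γ ∧
      (∀ u v, γ (sE u v) = sE (γ u) (γ v)) ∧
      (∀ u v, γ (pE u v) = pE (γ u) (γ v)) ∧
      (∀ a : B, γ (i a) = i a) ∧ (∀ x : A, pr (γ (st x)) = x)
    let Z1 : (A → B) → Prop := fun φ =>
      IsLin k φ ∧
      (∀ x y, φ (sA x y) - sB (φ x) (φ y) = ls x (φ y) + rs y (φ x)) ∧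
      (∀ x y, φ (pA x y) - pB (φ x) (φ y) = lp x (φ y) + rp y (φ x)) ∧
      (∀ x a, sB (φ x) a = 0) ∧ (∀ x a, sB a (φ x) = 0) ∧
      (∀ x a, pB (φ x) a = 0) ∧ (∀ x a, pB a (φ x) = 0)
    -- S(γ)(x) is the unique element of B with i (S γ x) = γ (st x) - st x;
    -- it is well defined, lands in Z¹, S is a group homomorphism, injective and surjective
    (∀ γ, KerK γ → ∀ x, ∃ b : B, i b = γ (st x) - st x) ∧
    (∀ γ φ, KerK γ → (∀ x, i (φ x) = γ (st x) - st x) → Z1 φ) ∧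
    (∀ (γ1 γ2 : E → E) (φ1 φ2 φ3 : A → B), KerK γ1 → KerK γ2 →
        (∀ x, i (φ1 x) = γ1 (st x) - st x) →
        (∀ x, i (φ2 x) = γ2 (st x) - st x) →
        (∀ x, i (φ3 x) = γ1 (γ2 (st x)) - st x) →
        ∀ x, φ3 x = φ1 x + φ2 x) ∧
    (∀ (γ1 γ2 : E → E) (φ : A → B), KerK γ1 → KerK γ2 →
        (∀ x, i (φ x) = γ1 (st x) - st x) →
        (∀ x, i (φ x) = γ2 (st x) - st x) → γ1 = γ2) ∧
    (∀ φ, Z1 φ → ∃ γ, KerK γ ∧ ∀ x, i (φ x) = γ (st x) - st x) := by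
  intro KerK Z1
  -- basic wrappers
  have iadd : ∀ a b, i (a + b) = i a + i b := hi.addf
  have isub : ∀ a b, i (a - b) = i a - i b := hi.subf
  have izero : i 0 = 0 := hi.zerof
  have pradd : ∀ u v, pr (u + v) = pr u + pr v := hpr.addf
  have prsub : ∀ u v, pr (u - v) = pr u - pr v := hpr.subf
  have hpri : ∀ b, pr (i b) = 0 := fun b => (hexact (i b)).mpr ⟨b, rfl⟩
  obtain ⟨⟨sEr, sEl⟩, ⟨pEr, pEl⟩, -, -, -, -⟩ := hE
  have sEadd1 : ∀ u v w, sE (u + v) w = sE u w + sE v w := fun u v w => (sEl w).addf u v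
  have sEadd2 : ∀ u v w, sE u (v + w) = sE u v + sE u w := fun u v w => (sEr u).addf v w
  have sEsub1 : ∀ u v w, sE (u - v) w = sE u w - sE v w := fun u v w => (sEl w).subf u v
  have sEsub2 : ∀ u v w, sE u (v - w) = sE u v - sE u w := fun u v w => (sEr u).subf v w
  have pEadd1 : ∀ u v w, pE (u + v) w = pE u w + pE v w := fun u v w => (pEl w).addf u v
  have pEadd2 : ∀ u v w, pE u (v + w) = pE u v + pE u w := fun u v w => (pEr u).addf v w
  have pEsub1 : ∀ u v w, pE (u - v) w = pE u w - pE v w := fun u v w => (pEl w).subf u v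
  have pEsub2 : ∀ u v w, pE u (v - w) = pE u v - pE u w := fun u v w => (pEr u).subf v w
  have decomp : ∀ e : E, ∃ b, e = st (pr e) + i b := by
    intro e
    obtain ⟨b, hb⟩ := (hexact (e - st (pr e))).mp (by rw [prsub, hsec, sub_self])
    exact ⟨b, by rw [hb]; abel⟩
  refine ⟨?_, ?_, ?_, ?_, ?_⟩
  · -- well-definedness
    intro γ hγ x
    exact (hexact _).mp (by rw [prsub, hγ.2.2.2.2.2, hsec, sub_self])
  · -- lands in Z1
    intro γ φ hγ hφ
    obtain ⟨hγlin, -, hγs, hγp, hγB, -⟩ := hγ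
    have γadd : ∀ u v, γ (u + v) = γ u + γ v := hγlin.addf
    have γeq : ∀ x, γ (st x) = st x + i (φ x) := fun x => by rw [hφ]; abel
    have hφlin : IsLin k φ := by
      intro c x y
      apply hiinj
      calc i (φ (c • x + y)) = γ (st (c • x + y)) - st (c • x + y) := hφ _
        _ = γ (c • st x + st y) - (c • st x + st y) := by rw [hst]
        _ = (c • γ (st x) + γ (st y)) - (c • st x + st y) := by rw [hγlin]
        _ = c • (γ (st x) - st x) + (γ (st y) - st y) := by rw [smul_sub]; abel
        _ = c • i (φ x) + i (φ y) := by rw [hφ, hφ]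
        _ = i (c • φ x + φ y) := (hi c _ _).symm
    have cent1 : ∀ x a, sB (φ x) a = 0 := by
      intro x a
      apply hiinj
      have h1 : sE (γ (st x)) (i a) = sE (st x) (i a) := by
        calc sE (γ (st x)) (i a) = sE (γ (st x)) (γ (i a)) := by rw [hγB]
          _ = γ (sE (st x) (i a)) := (hγs _ _).symm
          _ = γ (i (ls x a)) := by rw [hls]
          _ = i (ls x a) := hγB _
          _ = sE (st x) (i a) := hls x a
      rw [his, hφ, izero, sEsub1, h1, sub_self]
    have cent2 : ∀ x a, sB a (φ x) = 0 := by
      intro x a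
      apply hiinj
      have h1 : sE (i a) (γ (st x)) = sE (i a) (st x) := by
        calc sE (i a) (γ (st x)) = sE (γ (i a)) (γ (st x)) := by rw [hγB]
          _ = γ (sE (i a) (st x)) := (hγs _ _).symm
          _ = γ (i (rs x a)) := by rw [hrs]
          _ = i (rs x a) := hγB _
          _ = sE (i a) (st x) := hrs x a
      rw [his, hφ, izero, sEsub2, h1, sub_self]
    have cent3 : ∀ x a, pB (φ x) a = 0 := by
      intro x a
      apply hiinj
      have h1 : pE (γ (st x)) (i a) = pE (st x) (i a) := by
        calc pE (γ (st x)) (i a) = pE (γ (st x)) (γ (i a)) := by rw [hγB]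
          _ = γ (pE (st x) (i a)) := (hγp _ _).symm
          _ = γ (i (lp x a)) := by rw [hlp]
          _ = i (lp x a) := hγB _
          _ = pE (st x) (i a) := hlp x a
      rw [hip, hφ, izero, pEsub1, h1, sub_self]
    have cent4 : ∀ x a, pB a (φ x) = 0 := by
      intro x a
      apply hiinj
      have h1 : pE (i a) (γ (st x)) = pE (i a) (st x) := by
        calc pE (i a) (γ (st x)) = pE (γ (i a)) (γ (st x)) := by rw [hγB]
          _ = γ (pE (i a) (st x)) := (hγp _ _).symm
          _ = γ (i (rp x a)) := by rw [hrp]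
          _ = i (rp x a) := hγB _
          _ = pE (i a) (st x) := hrp x a
      rw [hip, hφ, izero, pEsub2, h1, sub_self]
    refine ⟨hφlin, ?_, ?_, cent1, cent2, cent3, cent4⟩
    · intro x y
      obtain ⟨b, hb⟩ := (hexact (sE (st x) (st y) - st (sA x y))).mp
        (by rw [prsub, hprs, hsec, hsec, hsec, sub_self])
      have hdec : sE (st x) (st y) = st (sA x y) + i b := by rw [hb]; abel
      have hγcalc : γ (st (sA x y)) - st (sA x y)
          = sE (γ (st x)) (γ (st y)) - sE (st x) (st y) := by
        have h1 : γ (sE (st x) (st y)) = γ (st (sA x y)) + i b := by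
          rw [hdec, γadd, hγB]
        rw [← hγs, h1, hdec]; abel
      apply hiinj
      calc i (φ (sA x y) - sB (φ x) (φ y))
          = i (φ (sA x y)) - i (sB (φ x) (φ y)) := isub _ _
        _ = (γ (st (sA x y)) - st (sA x y)) - sE (i (φ x)) (i (φ y)) := by
            rw [hφ, his]
        _ = (sE (γ (st x)) (γ (st y)) - sE (st x) (st y)) - sE (i (φ x)) (i (φ y)) := by
            rw [hγcalc]
        _ = sE (st x) (i (φ y)) + sE (i (φ x)) (st y) := by
            rw [γeq x, γeq y, sEadd1, sEadd2, sEadd2]; abel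
        _ = i (ls x (φ y)) + i (rs y (φ x)) := by rw [hls, hrs]
        _ = i (ls x (φ y) + rs y (φ x)) := (iadd _ _).symm
    · intro x y
      obtain ⟨b, hb⟩ := (hexact (pE (st x) (st y) - st (pA x y))).mp
        (by rw [prsub, hprp, hsec, hsec, hsec, sub_self])
      have hdec : pE (st x) (st y) = st (pA x y) + i b := by rw [hb]; abel
      have hγcalc : γ (st (pA x y)) - st (pA x y)
          = pE (γ (st x)) (γ (st y)) - pE (st x) (st y) := by
        have h1 : γ (pE (st x) (st y)) = γ (st (pA x y)) + i b := by
          rw [hdec, γadd, hγB]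
        rw [← hγp, h1, hdec]; abel
      apply hiinj
      calc i (φ (pA x y) - pB (φ x) (φ y))
          = i (φ (pA x y)) - i (pB (φ x) (φ y)) := isub _ _
        _ = (γ (st (pA x y)) - st (pA x y)) - pE (i (φ x)) (i (φ y)) := by
            rw [hφ, hip]
        _ = (pE (γ (st x)) (γ (st y)) - pE (st x) (st y)) - pE (i (φ x)) (i (φ y)) := by
            rw [hγcalc]
        _ = pE (st x) (i (φ y)) + pE (i (φ x)) (st y) := by
            rw [γeq x, γeq y, pEadd1, pEadd2, pEadd2]; abel
        _ = i (lp x (φ y)) + i (rp y (φ x)) := by rw [hlp, hrp]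
        _ = i (lp x (φ y) + rp y (φ x)) := (iadd _ _).symm
  · -- group homomorphism
    intro γ1 γ2 φ1 φ2 φ3 h1 h2 hφ1 hφ2 hφ3 x
    apply hiinj
    have g2 : γ2 (st x) = st x + i (φ2 x) := by rw [hφ2]; abel
    calc i (φ3 x) = γ1 (γ2 (st x)) - st x := hφ3 x
      _ = γ1 (st x + i (φ2 x)) - st x := by rw [g2]
      _ = (γ1 (st x) + i (φ2 x)) - st x := by rw [h1.1.addf, h1.2.2.2.2.1]
      _ = i (φ1 x) + i (φ2 x) := by rw [hφ1]; abel
      _ = i (φ1 x + φ2 x) := (iadd _ _).symm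
  · -- injectivity
    intro γ1 γ2 φ h1 h2 hφ1 hφ2
    funext e
    obtain ⟨b, hb⟩ := decomp e
    have g1 : γ1 (st (pr e)) = st (pr e) + i (φ (pr e)) := by rw [hφ1]; abel
    have g2 : γ2 (st (pr e)) = st (pr e) + i (φ (pr e)) := by rw [hφ2]; abel
    rw [hb, h1.1.addf, h2.1.addf, h1.2.2.2.2.1, h2.2.2.2.2.1, g1, g2]
  · -- surjectivity
    intro φ hφZ
    obtain ⟨hφlin, hcs, hcp, c1, c2, c3, c4⟩ := hφZ
    have φs : ∀ x y, φ (sA x y) = ls x (φ y) + rs y (φ x) := by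
      intro x y; have h := hcs x y; rwa [c1, sub_zero] at h
    have φp : ∀ x y, φ (pA x y) = lp x (φ y) + rp y (φ x) := by
      intro x y; have h := hcp x y; rwa [c3, sub_zero] at h
    refine ⟨fun e => e + i (φ (pr e)), ⟨?_, ?_, ?_, ?_, ?_, ?_⟩, ?_⟩
    · -- linear
      intro c u v
      show (c • u + v) + i (φ (pr (c • u + v)))
          = c • (u + i (φ (pr u))) + (v + i (φ (pr v)))
      rw [hpr, hφlin, hi, smul_add]; abel
    · -- bijective
      refine Function.bijective_iff_has_inverse.mpr ⟨fun e => e - i (φ (pr e)), ?_, ?_⟩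
      · intro e
        show (e + i (φ (pr e))) - i (φ (pr (e + i (φ (pr e))))) = e
        have hp : pr (e + i (φ (pr e))) = pr e := by rw [pradd, hpri, add_zero]
        rw [hp]; abel
      · intro e
        show (e - i (φ (pr e))) + i (φ (pr (e - i (φ (pr e))))) = e
        have hp : pr (e - i (φ (pr e))) = pr e := by rw [prsub, hpri, sub_zero]
        rw [hp]; abel
    · -- multiplicative for sE
      intro u v
      show sE u v + i (φ (pr (sE u v)))
          = sE (u + i (φ (pr u))) (v + i (φ (pr v)))
      obtain ⟨bu, hbu⟩ := decomp u
      obtain ⟨bv, hbv⟩ := decomp v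
      have e1 : sE u (i (φ (pr v))) = i (ls (pr u) (φ (pr v))) := by
        calc sE u (i (φ (pr v)))
            = sE (st (pr u)) (i (φ (pr v))) + sE (i bu) (i (φ (pr v))) := by
              rw [hbu, sEadd1]; rw [← hbu]
          _ = i (ls (pr u) (φ (pr v))) + i (sB bu (φ (pr v))) := by rw [hls, his]
          _ = i (ls (pr u) (φ (pr v))) := by rw [c2, izero, add_zero]
      have e2 : sE (i (φ (pr u))) v = i (rs (pr v) (φ (pr u))) := by
        calc sE (i (φ (pr u))) v
            = sE (i (φ (pr u))) (st (pr v)) + sE (i (φ (pr u))) (i bv) := by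
              rw [hbv, sEadd2]; rw [← hbv]
          _ = i (rs (pr v) (φ (pr u))) + i (sB (φ (pr u)) bv) := by rw [hrs, his]
          _ = i (rs (pr v) (φ (pr u))) := by rw [c1, izero, add_zero]
      have e3 : sE (i (φ (pr u))) (i (φ (pr v))) = 0 := by
        rw [← his, c1, izero]
      rw [sEadd2, sEadd1, sEadd1, e1, e2, e3, hprs, φs, iadd]
      abel
    · -- multiplicative for pE
      intro u v
      show pE u v + i (φ (pr (pE u v)))
          = pE (u + i (φ (pr u))) (v + i (φ (pr v)))
      obtain ⟨bu, hbu⟩ := decomp u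
      obtain ⟨bv, hbv⟩ := decomp v
      have e1 : pE u (i (φ (pr v))) = i (lp (pr u) (φ (pr v))) := by
        calc pE u (i (φ (pr v)))
            = pE (st (pr u)) (i (φ (pr v))) + pE (i bu) (i (φ (pr v))) := by
              rw [hbu, pEadd1]; rw [← hbu]
          _ = i (lp (pr u) (φ (pr v))) + i (pB bu (φ (pr v))) := by rw [hlp, hip]
          _ = i (lp (pr u) (φ (pr v))) := by rw [c4, izero, add_zero]
      have e2 : pE (i (φ (pr u))) v = i (rp (pr v) (φ (pr u))) := by
        calc pE (i (φ (pr u))) v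
            = pE (i (φ (pr u))) (st (pr v)) + pE (i (φ (pr u))) (i bv) := by
              rw [hbv, pEadd2]; rw [← hbv]
          _ = i (rp (pr v) (φ (pr u))) + i (pB (φ (pr u)) bv) := by rw [hrp, hip]
          _ = i (rp (pr v) (φ (pr u))) := by rw [c3, izero, add_zero]
      have e3 : pE (i (φ (pr u))) (i (φ (pr v))) = 0 := by
        rw [← hip, c3, izero]
      rw [pEadd2, pEadd1, pEadd1, e1, e2, e3, hprp, φp, iadd]
      abel
    · -- fixes i B
      intro a
      show i a + i (φ (pr (i a))) = i a
      rw [hpri, hφlin.zerof, izero, add_zero]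
    · -- projection
      intro x
      show pr (st x + i (φ (pr (st x)))) = x
      rw [pradd, hpri, add_zero, hsec]
    · -- defining property
      intro x
      show i (φ x) = (st x + i (φ (pr (st x)))) - st x
      rw [hsec]; abel
end
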